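/- arXiv:1112.1564 — 7 statements merged into one kernel-verified Lean document; each statement's English description precedes it below -/
import Mathlib

section
/- Let B = (b_1, …, b_n) be a 3/4-LLL reduced basis and let B' be its lifted basis. Then λ1(L(B))² ≤ λ1(L(B'))² ≤ λ1(L(B))² + 2^{-n/2}. -/
noncomputable section

/-- The lattice generated by the vectors `B i`: all integer linear combinations. -/
def latticeOf {m n : ℕ} (B : Fin n → EuclideanSpace ℝ (Fin m)) :
    Set (EuclideanSpace ℝ (Fin m)) :=
  {v | ∃ x : Fin n → ℤ, v = ∑ i, (x i : ℝ) • B i}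

/-- `λ₁ L`: the minimum Euclidean norm of a nonzero vector of `L`. -/
def lambda1 {m : ℕ} (L : Set (EuclideanSpace ℝ (Fin m))) : ℝ :=
  sInf {r | ∃ v ∈ L, v ≠ 0 ∧ ‖v‖ = r}

/-- `λ₂ L`: the smallest `r` such that `L` contains two linearly independent
vectors of norm at most `r`. -/
def lambda2 {m : ℕ} (L : Set (EuclideanSpace ℝ (Fin m))) : ℝ :=
  sInf {r | ∃ v ∈ L, ∃ w ∈ L, LinearIndependent ℝ ![v, w] ∧ ‖v‖ ≤ r ∧ ‖w‖ ≤ r}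

instance (n : ℕ) : WellFoundedLT (Fin n) := inferInstance

/-- The Gram–Schmidt coefficient `μ i j = ⟨b i, b̃ j⟩ / ⟨b̃ j, b̃ j⟩`. -/
def mu {m n : ℕ} (B : Fin n → EuclideanSpace ℝ (Fin m)) (i j : Fin n) : ℝ :=
  (inner ℝ (B i) (InnerProductSpace.gramSchmidt ℝ B j) : ℝ) /
    (inner ℝ (InnerProductSpace.gramSchmidt ℝ B j) (InnerProductSpace.gramSchmidt ℝ B j) : ℝ)

/-- `B` is a 3/4-LLL reduced basis. -/
def LLLReduced {m n : ℕ} (B : Fin n → EuclideanSpace ℝ (Fin m)) : Prop :=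
  (∀ i j : Fin n, j < i → |mu B i j| ≤ 1 / 2) ∧
  (∀ i : Fin n, ∀ h : (i : ℕ) + 1 < n,
    (3 / 4 : ℝ) * ‖InnerProductSpace.gramSchmidt ℝ B i‖ ^ 2 ≤
      ‖mu B ⟨(i : ℕ) + 1, h⟩ i • InnerProductSpace.gramSchmidt ℝ B i + InnerProductSpace.gramSchmidt ℝ B ⟨(i : ℕ) + 1, h⟩‖ ^ 2)

/-- The lifted basis `B'` in `ℝ^(m+n)`: `b'ᵢ` agrees with `bᵢ` on the first `m`
coordinates, has `2^(2(i-1)n)/2^(2n²)` in coordinate `m+i` and `0` elsewhere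
(here `i : Fin n` is the zero-based index, corresponding to `i-1` in one-based notation). -/
def lifted {m n : ℕ} (B : Fin n → EuclideanSpace ℝ (Fin m)) :
    Fin n → EuclideanSpace ℝ (Fin (m + n)) :=
  fun i => (EuclideanSpace.equiv (Fin (m + n)) ℝ).symm
    (fun j => if h : (j : ℕ) < m then B i ⟨j, h⟩
      else if (j : ℕ) = m + (i : ℕ) then (2 : ℝ) ^ (2 * (i : ℕ) * n) / 2 ^ (2 * n ^ 2) else 0)

open InnerProductSpace

/- ### generic helpers -/
lemma le_of_sq_le_sq' {a b : ℝ} (ha : 0 ≤ a) (hb : 0 ≤ b) (h : a^2 ≤ b^2) : a ≤ b := by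
  nlinarith

lemma two_mul_le_four_pow (n : ℕ) : 2*(n:ℝ) ≤ 4^n := by
  induction n with
  | zero => norm_num
  | succ k ih =>
    have h1 : (1:ℝ) ≤ 4^k := one_le_pow₀ (by norm_num)
    push_cast
    calc 2*((k:ℝ)+1) = 2*(k:ℝ) + 2 := by ring
      _ ≤ 4^k + 2 := by linarith
      _ ≤ 4^(k+1) := by rw [pow_succ]; nlinarith

lemma ind_sum {N M : ℕ} (w : Fin N → EuclideanSpace ℝ (Fin M)) (j : Fin N) :
    ∑ i, (((if i = j then (1:ℤ) else 0) : ℤ):ℝ) • w i = w j := by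
  rw [Finset.sum_eq_single j] <;> simp +contextual

/- ### coordinates of the lifted vectors -/
variable {m n : ℕ} (B : Fin n → EuclideanSpace ℝ (Fin m))

lemma lifted_apply (i : Fin n) (k : Fin (m+n)) :
    lifted B i k = if h : (k : ℕ) < m then B i ⟨k, h⟩
      else if (k : ℕ) = m + (i : ℕ) then (2 : ℝ) ^ (2 * (i : ℕ) * n) / 2 ^ (2 * n ^ 2) else 0 := rfl

lemma sum_apply' {N M : ℕ} (x : Fin N → ℝ) (w : Fin N → EuclideanSpace ℝ (Fin M)) (k : Fin M) :
    (∑ i, x i • w i) k = ∑ i, x i * (w i k) := by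
  induction (Finset.univ : Finset (Fin N)) using Finset.induction with
  | empty => rfl
  | insert a s h ih => simp [Finset.sum_insert h, ih]

lemma norm_sq_eq {k : ℕ} (x : EuclideanSpace ℝ (Fin k)) : ‖x‖^2 = ∑ i, x i ^ 2 := by
  rw [EuclideanSpace.norm_eq, Real.sq_sqrt (by positivity)]
  simp [Real.norm_eq_abs, sq_abs]

lemma lift_coord1 (x : Fin n → ℝ) (k : Fin m) :
    (∑ i, x i • lifted B i) (Fin.castAdd n k) = (∑ i, x i • B i) k := by
  rw [sum_apply', sum_apply']
  refine Finset.sum_congr rfl fun i _ => ?_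
  rw [lifted_apply, dif_pos (by simpa using k.isLt)]
  congr 1

lemma lift_coord2 (x : Fin n → ℝ) (j : Fin n) :
    (∑ i, x i • lifted B i) (Fin.natAdd m j) =
      x j * ((2 : ℝ) ^ (2 * (j : ℕ) * n) / 2 ^ (2 * n ^ 2)) := by
  rw [sum_apply', Finset.sum_eq_single j]
  · rw [lifted_apply, dif_neg (by simp), if_pos (by simp)]
  · intro i _ hij
    rw [lifted_apply, dif_neg (by simp), if_neg (by simp [Fin.val_eq_val]; omega), mul_zero]
  · simp

lemma lift_norm (x : Fin n → ℝ) :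
    ‖∑ i, x i • lifted B i‖^2 = ‖∑ i, x i • B i‖^2 +
      ∑ j : Fin n, (x j * ((2:ℝ) ^ (2 * (j : ℕ) * n) / 2 ^ (2 * n ^ 2)))^2 := by
  rw [norm_sq_eq, norm_sq_eq, Fin.sum_univ_add]
  congr 1
  · exact Finset.sum_congr rfl fun k _ => by rw [lift_coord1]
  · exact Finset.sum_congr rfl fun j _ => by rw [lift_coord2]

/- ### Gram–Schmidt facts -/
local notation "g" => gramSchmidt ℝ B

lemma mu_lt {i j : Fin n} (h : i < j) : mu B i j = 0 := by
  have := gramSchmidt_inv_triangular ℝ B h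
  rw [mu, real_inner_comm, this, zero_div]

lemma inner_self_gram (i : Fin n) :
    (inner ℝ (B i) (g i) : ℝ) = ‖g i‖ ^ 2 := by
  conv_lhs => rw [gramSchmidt_def'' ℝ B i]
  rw [inner_add_left, real_inner_self_eq_norm_sq, sum_inner]
  rw [Finset.sum_eq_zero, add_zero, sq]
  intro k hk
  have : (inner ℝ (g k) (g i) : ℝ) = 0 :=
    gramSchmidt_orthogonal ℝ B (Finset.mem_Iio.1 hk).ne
  rw [inner_smul_left]
  simp [this]

lemma inner_B_gram (hB : LinearIndependent ℝ B) (i j : Fin n) :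
    (inner ℝ (B i) (g j) : ℝ) = mu B i j * ‖g j‖ ^ 2 := by
  have h0 : g j ≠ 0 := gramSchmidt_ne_zero _ hB
  rw [mu, real_inner_self_eq_norm_sq, div_mul_cancel₀]
  exact pow_ne_zero _ (norm_ne_zero_iff.2 h0)

lemma inner_v_gram (hB : LinearIndependent ℝ B) (α : Fin n → ℝ) (j : Fin n) :
    (inner ℝ (∑ i, α i • B i) (g j) : ℝ) = (∑ i, α i * mu B i j) * ‖g j‖ ^ 2 := by
  rw [sum_inner, Finset.sum_mul]
  refine Finset.sum_congr rfl fun i _ => ?_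
  rw [real_inner_smul_left, inner_B_gram B hB, mul_assoc]

lemma beta_bound (hB : LinearIndependent ℝ B) (α : Fin n → ℝ) (j : Fin n) :
    |∑ i, α i * mu B i j| * ‖g j‖ ≤ ‖∑ i, α i • B i‖ := by
  have h0 : (0:ℝ) < ‖g j‖ := norm_pos_iff.2 (gramSchmidt_ne_zero _ hB)
  have hcs := abs_real_inner_le_norm (∑ i, α i • B i) (g j)
  rw [inner_v_gram B hB, abs_mul, abs_of_nonneg (by positivity : (0:ℝ) ≤ ‖g j‖^2)] at hcs
  calc |∑ i, α i * mu B i j| * ‖g j‖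
      = |∑ i, α i * mu B i j| * ‖g j‖^2 / ‖g j‖ := by rw [sq]; field_simp
    _ ≤ ‖∑ i, α i • B i‖ * ‖g j‖ / ‖g j‖ := by
        exact div_le_div_of_nonneg_right hcs h0.le |>.trans_eq rfl
    _ = ‖∑ i, α i • B i‖ := by field_simp

lemma gram_step (hB : LinearIndependent ℝ B) (hLLL : LLLReduced B)
    (j : ℕ) (hj : j + 1 < n) :
    (1/2 : ℝ) * ‖g ⟨j, by omega⟩‖^2 ≤ ‖g ⟨j+1, hj⟩‖^2 := by
  set i : Fin n := ⟨j, by omega⟩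
  set i' : Fin n := ⟨j+1, hj⟩
  have h2 := hLLL.2 i hj
  have hmu : |mu B i' i| ≤ 1/2 := hLLL.1 i' i (by simp [i, i', Fin.lt_def])
  have horth : (inner ℝ (g i) (g i') : ℝ) = 0 :=
    gramSchmidt_orthogonal ℝ B (by simp [i, i', Fin.ext_iff])
  have hpyth : ‖mu B i' i • g i + g i'‖^2 = (mu B i' i)^2 * ‖g i‖^2 + ‖g i'‖^2 := by
    rw [norm_add_sq_real, real_inner_smul_left, horth, mul_zero, norm_smul]
    simp [mul_pow, sq_abs]
  have hmu2 : (mu B i' i)^2 ≤ 1/4 := by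
    have := abs_nonneg (mu B i' i)
    nlinarith [sq_abs (mu B i' i)]
  have hg : (0:ℝ) ≤ ‖g i‖^2 := by positivity
  nlinarith [h2, hpyth]

lemma gram_lower (hB : LinearIndependent ℝ B) (hLLL : LLLReduced B)
    (hn : 0 < n) (j : ℕ) (hj : j < n) :
    (1/2 : ℝ)^j * ‖g ⟨0, hn⟩‖^2 ≤ ‖g ⟨j, hj⟩‖^2 := by
  induction j with
  | zero => simp
  | succ k ih =>
    have hk : k < n := by omega
    calc (1/2:ℝ)^(k+1) * ‖g ⟨0,hn⟩‖^2 = (1/2) * ((1/2)^k * ‖g ⟨0,hn⟩‖^2) := by ring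
      _ ≤ (1/2) * ‖g ⟨k, hk⟩‖^2 := by linarith [ih hk]
      _ ≤ ‖g ⟨k+1, hj⟩‖^2 := gram_step B hB hLLL k hj

lemma mu_self (hB : LinearIndependent ℝ B) (i : Fin n) : mu B i i = 1 := by
  have h0 : g i ≠ 0 := gramSchmidt_ne_zero _ hB
  rw [mu, inner_self_gram B, real_inner_self_eq_norm_sq]
  have : ‖g i‖ ≠ 0 := norm_ne_zero_iff.2 h0
  field_simp

lemma coeff_split (hB : LinearIndependent ℝ B) (α : Fin n → ℝ) (j : Fin n) :
    α j = (∑ i, α i * mu B i j) - ∑ i ∈ Finset.Ioi j, α i * mu B i j := by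
  have h1 : (∑ i, α i * mu B i j) = ∑ i ∈ Finset.Ici j, α i * mu B i j := by
    refine (Finset.sum_subset (Finset.subset_univ _) fun i _ hi => ?_).symm
    rw [mu_lt B (by simpa [Finset.mem_Ici, not_le] using hi), mul_zero]
  rw [h1, Finset.Ici_eq_cons_Ioi, Finset.sum_cons, mu_self B hB, mul_one]
  ring

lemma coeff_bound (hB : LinearIndependent ℝ B) (hLLL : LLLReduced B)
    (α : Fin n → ℝ) (K : ℝ)
    (hK : ∀ j : Fin n, ‖∑ i, α i • B i‖ ≤ K * ‖g j‖) (j : Fin n) :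
    |α j| ≤ K * (3/2:ℝ)^(n - 1 - (j:ℕ)) := by
  have hβ : ∀ j : Fin n, |∑ i, α i * mu B i j| ≤ K := by
    intro j
    have h0 : (0:ℝ) < ‖g j‖ := norm_pos_iff.2 (gramSchmidt_ne_zero _ hB)
    have := (beta_bound B hB α j).trans (hK j)
    exact le_of_mul_le_mul_right this h0
  have main : ∀ t : ℕ, ∀ j : Fin n, n - 1 - (j:ℕ) ≤ t →
      |α j| ≤ K * (3/2:ℝ)^(n-1-(j:ℕ)) ∧
      ∑ i ∈ Finset.Ici j, |α i| ≤ 2*K*((3/2:ℝ)^(n-(j:ℕ)) - 1) := by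
    intro t
    induction t using Nat.strong_induction_on with
    | _ t ih =>
    intro j hj
    have hIoi : ∑ i ∈ Finset.Ioi j, |α i| ≤ 2*K*((3/2:ℝ)^(n-1-(j:ℕ)) - 1) := by
      by_cases hsucc : (j:ℕ)+1 < n
      · set j' : Fin n := ⟨(j:ℕ)+1, hsucc⟩ with hj'
        have hIoiIci : Finset.Ioi j = Finset.Ici j' := by
          ext i
          simp only [Finset.mem_Ioi, Finset.mem_Ici, Fin.lt_def, Fin.le_def, hj']
          omega
        have hlt : n - 1 - ((j' : Fin n):ℕ) < t := by
          simp only [hj']; omega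
        have h2 := (ih _ hlt j' le_rfl).2
        rw [hIoiIci]
        have he : n - ((j' : Fin n):ℕ) = n - 1 - (j:ℕ) := by simp only [hj']; omega
        rwa [he] at h2
      · have hempty : Finset.Ioi j = ∅ := by
          ext i
          simp only [Finset.mem_Ioi, Fin.lt_def, Finset.notMem_empty, iff_false, not_lt]
          omega
        have he : n - 1 - (j:ℕ) = 0 := by omega
        rw [hempty, he]
        simp
    have hαj : |α j| ≤ K * (3/2:ℝ)^(n-1-(j:ℕ)) := by
      have habs : |∑ i ∈ Finset.Ioi j, α i * mu B i j| ≤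
          (1/2) * ∑ i ∈ Finset.Ioi j, |α i| := by
        calc |∑ i ∈ Finset.Ioi j, α i * mu B i j|
            ≤ ∑ i ∈ Finset.Ioi j, |α i * mu B i j| := Finset.abs_sum_le_sum_abs _ _
          _ ≤ ∑ i ∈ Finset.Ioi j, |α i| * (1/2) := Finset.sum_le_sum fun i hi => by
              rw [abs_mul]
              exact mul_le_mul_of_nonneg_left (hLLL.1 i j (Finset.mem_Ioi.1 hi)) (abs_nonneg _)
          _ = (1/2) * ∑ i ∈ Finset.Ioi j, |α i| := by rw [← Finset.sum_mul]; ring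
      have h1 : |α j| ≤ K + (1/2) * ∑ i ∈ Finset.Ioi j, |α i| := by
        rw [coeff_split B hB α j]
        calc |(∑ i, α i * mu B i j) - ∑ i ∈ Finset.Ioi j, α i * mu B i j|
            ≤ |∑ i, α i * mu B i j| + |∑ i ∈ Finset.Ioi j, α i * mu B i j| := abs_sub _ _
          _ ≤ K + (1/2) * ∑ i ∈ Finset.Ioi j, |α i| := add_le_add (hβ j) habs
      linarith
    refine ⟨hαj, ?_⟩
    have hsum : ∑ i ∈ Finset.Ici j, |α i| = |α j| + ∑ i ∈ Finset.Ioi j, |α i| := by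
      rw [Finset.Ici_eq_cons_Ioi, Finset.sum_cons]
    have hexp : n - (j:ℕ) = (n - 1 - (j:ℕ)) + 1 := by omega
    rw [hsum, hexp, pow_succ]
    nlinarith [hαj, hIoi]
  exact (main (n - 1 - (j:ℕ)) j le_rfl).1

lemma exp_ineq (a b N : ℕ) (h : N = a + 1 + b) :
    (N+1) + 2*b + 4*a*N + 3*N ≤ 1 + 4*N^2 := by subst h; nlinarith

/- ### per-term numeric bound -/
lemma per_term (hn : 0 < n) (j : Fin n) :
    (2:ℝ)^(n+1) * (9/4:ℝ)^(n-1-(j:ℕ)) * ((2:ℝ)^(2*(j:ℕ)*n)/2^(2*n^2))^2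
      ≤ 2*(1/8:ℝ)^n := by
  have h94 : (9/4:ℝ)^(n-1-(j:ℕ)) ≤ (4:ℝ)^(n-1-(j:ℕ)) :=
    pow_le_pow_left₀ (by norm_num) (by norm_num) _
  have hc : ((2:ℝ)^(2*(j:ℕ)*n)/2^(2*n^2))^2 = (2:ℝ)^(4*(j:ℕ)*n)/2^(4*n^2) := by
    rw [div_pow, ← pow_mul, ← pow_mul]
    congr 1 <;> ring
  rw [hc]
  have hstep : (2:ℝ)^(n+1) * (9/4:ℝ)^(n-1-(j:ℕ)) * ((2:ℝ)^(4*(j:ℕ)*n)/2^(4*n^2))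
      ≤ (2:ℝ)^(n+1) * (4:ℝ)^(n-1-(j:ℕ)) * ((2:ℝ)^(4*(j:ℕ)*n)/2^(4*n^2)) := by
    have : (0:ℝ) ≤ (2:ℝ)^(n+1) * ((2:ℝ)^(4*(j:ℕ)*n)/2^(4*n^2)) := by positivity
    nlinarith [h94, pow_pos (by norm_num : (0:ℝ) < 2) (n+1),
      div_nonneg (pow_nonneg (by norm_num : (0:ℝ) ≤ 2) (4*(j:ℕ)*n))
        (pow_nonneg (by norm_num : (0:ℝ) ≤ 2) (4*n^2))]
  refine hstep.trans ?_
  have hE : (2:ℝ)^(n+1) * (4:ℝ)^(n-1-(j:ℕ)) * ((2:ℝ)^(4*(j:ℕ)*n)/2^(4*n^2))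
      = (2:ℝ)^((n+1)+2*(n-1-(j:ℕ))+4*(j:ℕ)*n) / 2^(4*n^2) := by
    have h4 : (4:ℝ)^(n-1-(j:ℕ)) = 2^(2*(n-1-(j:ℕ))) := by
      rw [pow_mul]; norm_num
    rw [h4, pow_add, pow_add]
    ring
  have hR : 2*((1:ℝ)/8)^n = 2 / 2^(3*n) := by
    rw [show ((1:ℝ)/8) = (2^3)⁻¹ by norm_num, inv_pow, ← pow_mul]
    rw [div_eq_mul_inv]
  rw [hE, hR, div_le_div_iff₀ (by positivity) (by positivity)]
  have hexp : (n+1)+2*(n-1-(j:ℕ))+4*(j:ℕ)*n + 3*n ≤ 1 + 4*n^2 := by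
    have hj1 : (j:ℕ) < n := j.isLt
    obtain ⟨d, hd⟩ : ∃ d, n = (j:ℕ) + 1 + d := ⟨n - (j:ℕ) - 1, by omega⟩
    have he : n - 1 - (j:ℕ) = d := by omega
    rw [he]
    exact exp_ineq (j:ℕ) d n hd
  calc (2:ℝ)^((n+1)+2*(n-1-(j:ℕ))+4*(j:ℕ)*n) * 2^(3*n)
      = 2^((n+1)+2*(n-1-(j:ℕ))+4*(j:ℕ)*n + 3*n) := by rw [← pow_add]
    _ ≤ 2^(1 + 4*n^2) := pow_le_pow_right₀ (by norm_num) hexp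
    _ = 2 * 2^(4*n^2) := by rw [pow_add]; norm_num

set_option maxHeartbeats 2000000 in
/-- For a 3/4-LLL reduced basis `B` with lifted basis `B'`,
`λ₁(L(B))² ≤ λ₁(L(B'))² ≤ λ₁(L(B))² + 2^{-n/2}`. -/
theorem stmt1 {m n : ℕ} (B : Fin n → EuclideanSpace ℝ (Fin m))
    (hB : LinearIndependent ℝ B) (hLLL : LLLReduced B) :
    lambda1 (latticeOf B) ^ 2 ≤ lambda1 (latticeOf (lifted B)) ^ 2 ∧
    lambda1 (latticeOf (lifted B)) ^ 2 ≤
      lambda1 (latticeOf B) ^ 2 + (2 : ℝ) ^ (-(n : ℝ) / 2) := by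
  rcases Nat.eq_zero_or_pos n with hn | hn
  · subst hn
    have hL : ∀ (M : ℕ) (C : Fin 0 → EuclideanSpace ℝ (Fin M)),
        {r | ∃ v ∈ latticeOf C, v ≠ 0 ∧ ‖v‖ = r} = ∅ := by
      intro M C; ext r
      simp only [Set.mem_setOf_eq, Set.mem_empty_iff_false, iff_false, not_exists]
      rintro v ⟨⟨x, hv⟩, hne, _⟩
      exact hne (by simp [hv])
    have e1 : lambda1 (latticeOf B) = 0 := by rw [lambda1, hL, Real.sInf_empty]
    have e2 : lambda1 (latticeOf (lifted B)) = 0 := by rw [lambda1, hL, Real.sInf_empty]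
    rw [e1, e2]
    refine ⟨le_rfl, ?_⟩
    have hp : (0:ℝ) < (2:ℝ) ^ (-(Nat.cast 0 : ℝ)/2) := Real.rpow_pos_of_pos (by norm_num) _
    nlinarith [hp]
  -- main case
  set j0 : Fin n := ⟨0, hn⟩ with hj0
  set S := {r | ∃ v ∈ latticeOf B, v ≠ 0 ∧ ‖v‖ = r} with hSdef
  set S' := {r | ∃ v ∈ latticeOf (lifted B), v ≠ 0 ∧ ‖v‖ = r} with hS'def
  have eS : lambda1 (latticeOf B) = sInf S := rfl
  have eS' : lambda1 (latticeOf (lifted B)) = sInf S' := rfl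
  have hg0B : gramSchmidt ℝ B j0 = B j0 := by
    rw [gramSchmidt_def]
    have h : Finset.Iio j0 = ∅ := by
      ext i; simp [Fin.lt_def, hj0]
    rw [h]; simp
  have hB0ne : B j0 ≠ 0 := hB.ne_zero j0
  have hg0pos : (0:ℝ) < ‖B j0‖ := norm_pos_iff.2 hB0ne
  have hbddS : BddBelow S := by
    refine ⟨0, fun r hr => ?_⟩
    obtain ⟨v, _, _, h⟩ := hr; rw [← h]; exact norm_nonneg v
  have hbddS' : BddBelow S' := by
    refine ⟨0, fun r hr => ?_⟩
    obtain ⟨v, _, _, h⟩ := hr; rw [← h]; exact norm_nonneg v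
  have hSne : ‖B j0‖ ∈ S := by
    refine ⟨B j0, ⟨fun i => if i = j0 then 1 else 0, ?_⟩, hB0ne, rfl⟩
    exact (ind_sum B j0).symm
  have hlB0 : 0 ≤ sInf S := Real.sInf_nonneg fun r hr => by
    obtain ⟨v, _, _, h⟩ := hr; rw [← h]; exact norm_nonneg v
  have hlp0 : 0 ≤ sInf S' := Real.sInf_nonneg fun r hr => by
    obtain ⟨v, _, _, h⟩ := hr; rw [← h]; exact norm_nonneg v
  have hlB_le : sInf S ≤ ‖B j0‖ := csInf_le hbddS hSne
  have hnz : ∀ x : Fin n → ℤ, (∑ i, (x i:ℝ) • B i) = 0 → ∀ i, x i = 0 := by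
    intro x hx i
    have := (Fintype.linearIndependent_iff.1 hB) (fun i => (x i : ℝ)) hx i
    exact_mod_cast this
  -- nonzero lift from nonzero coefficients
  have hliftnorm : ∀ x : Fin n → ℤ,
      ‖∑ i, (x i:ℝ) • lifted B i‖^2 = ‖∑ i, (x i:ℝ) • B i‖^2 +
        ∑ j : Fin n, ((x j : ℝ) * ((2:ℝ) ^ (2 * (j : ℕ) * n) / 2 ^ (2 * n ^ 2)))^2 :=
    fun x => lift_norm B _
  have hTnn : ∀ x : Fin n → ℤ,
      0 ≤ ∑ j : Fin n, ((x j:ℝ) * ((2:ℝ) ^ (2 * (j : ℕ) * n) / 2 ^ (2 * n ^ 2)))^2 :=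
    fun x => Finset.sum_nonneg fun j _ => sq_nonneg _
  -- Part 1
  have hS'ne : S'.Nonempty := by
    refine ⟨‖lifted B j0‖, lifted B j0,
      ⟨fun i => if i = j0 then 1 else 0, (ind_sum (lifted B) j0).symm⟩, ?_, rfl⟩
    intro h0
    have h1 := hliftnorm (fun i => if i = j0 then 1 else 0)
    rw [ind_sum, ind_sum, h0, norm_zero] at h1
    have := hTnn (fun i => if i = j0 then 1 else 0)
    nlinarith [hg0pos]
  have h1 : sInf S ≤ sInf S' := by
    refine le_csInf hS'ne ?_
    rintro r ⟨v', ⟨x, hx⟩, hv'ne, rfl⟩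
    have hwne : (∑ i, (x i:ℝ) • B i) ≠ 0 := by
      intro h0
      apply hv'ne
      have hx0 := hnz x h0
      rw [hx]
      exact Finset.sum_eq_zero fun i _ => by rw [hx0 i]; simp
    have hle : sInf S ≤ ‖∑ i, (x i:ℝ) • B i‖ :=
      csInf_le hbddS ⟨_, ⟨x, rfl⟩, hwne, rfl⟩
    refine hle.trans (le_of_sq_le_sq' (norm_nonneg _) (norm_nonneg _) ?_)
    rw [hx, hliftnorm x]
    linarith [hTnn x]
  refine ⟨by rw [eS, eS']; exact pow_le_pow_left₀ hlB0 h1 2, ?_⟩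
  -- Part 2
  rw [eS, eS']
  have hhalf : ((1:ℝ)/2)^n ≤ (2:ℝ)^(-(n:ℝ)/2) := by
    have e1 : ((1:ℝ)/2)^n = (2:ℝ)^(-(n:ℝ)) := by
      rw [Real.rpow_neg (by norm_num), Real.rpow_natCast, one_div, inv_pow]
    rw [e1]
    exact (Real.rpow_le_rpow_left_iff (by norm_num)).2
      (by have : (0:ℝ) ≤ (n:ℝ) := Nat.cast_nonneg n; linarith)
  have key : sInf S' ^ 2 ≤ sInf S ^ 2 + ((1:ℝ)/2)^n := by
    refine le_of_forall_pos_le_add fun δ hδ => ?_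
    set l1 := sInf S with hl1
    set ε := min ‖B j0‖ (min 1 (δ/(2*l1+2))) with hε
    have hεpos : 0 < ε :=
      lt_min hg0pos (lt_min one_pos (div_pos hδ (by linarith)))
    obtain ⟨r, hrS, hrlt⟩ := Real.lt_sInf_add_pos ⟨_, hSne⟩ hεpos
    obtain ⟨v, ⟨α0, hv⟩, hvne, hr⟩ := hrS
    have hvlt : ‖v‖ < l1 + ε := by rw [hr]; exact hrlt
    have hεB : ε ≤ ‖B j0‖ := min_le_left _ _
    have hvle2 : ‖v‖ ≤ 2 * ‖B j0‖ := by linarith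
    set α : Fin n → ℝ := fun i => (α0 i : ℝ) with hα
    have hvsum : v = ∑ i, α i • B i := hv
    set K : ℝ := 2 * Real.sqrt 2 ^ (n-1) with hKdef
    have hsqrt2 : (Real.sqrt 2)^2 = 2 := Real.sq_sqrt (by norm_num)
    have hs2pow : (Real.sqrt 2 ^ (n-1))^2 = 2^(n-1) := by
      rw [← pow_mul, mul_comm (n-1) 2, pow_mul, hsqrt2]
    have hK : ∀ j : Fin n, ‖∑ i, α i • B i‖ ≤ K * ‖gramSchmidt ℝ B j‖ := by
      intro j
      have hglow := gram_lower B hB hLLL hn (j:ℕ) j.isLt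
      simp only [Fin.eta] at hglow
      rw [hg0B] at hglow
      have hid : (2:ℝ)^(j:ℕ) * (1/2:ℝ)^(j:ℕ) = 1 := by rw [← mul_pow]; norm_num
      have h2j : ‖B j0‖^2 ≤ 2^(n-1) * ‖gramSchmidt ℝ B j‖^2 := by
        calc ‖B j0‖^2 = 2^(j:ℕ) * ((1/2:ℝ)^(j:ℕ) * ‖B j0‖^2) := by
              rw [← mul_assoc, hid, one_mul]
          _ ≤ 2^(j:ℕ) * ‖gramSchmidt ℝ B j‖^2 :=
              mul_le_mul_of_nonneg_left hglow (by positivity)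
          _ ≤ 2^(n-1) * ‖gramSchmidt ℝ B j‖^2 :=
              mul_le_mul_of_nonneg_right
                (pow_le_pow_right₀ one_le_two (by omega)) (by positivity)
      have hB0le : ‖B j0‖ ≤ Real.sqrt 2 ^ (n-1) * ‖gramSchmidt ℝ B j‖ := by
        refine le_of_sq_le_sq' (norm_nonneg _) (by positivity) ?_
        rw [mul_pow, hs2pow]
        exact h2j
      calc ‖∑ i, α i • B i‖ = ‖v‖ := by rw [hvsum]
        _ ≤ 2 * ‖B j0‖ := hvle2
        _ ≤ 2 * (Real.sqrt 2 ^ (n-1) * ‖gramSchmidt ℝ B j‖) := by linarith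
        _ = K * ‖gramSchmidt ℝ B j‖ := by rw [hKdef]; ring
    have hαb := coeff_bound B hB hLLL α K hK
    have hK2 : K^2 = 2^(n+1) := by
      rw [hKdef, mul_pow, hs2pow, show n+1 = (n-1)+2 by omega, pow_add]
      ring
    have hT : ∑ j : Fin n, (α j * ((2:ℝ) ^ (2 * (j : ℕ) * n) / 2 ^ (2 * n ^ 2)))^2
        ≤ ((1:ℝ)/2)^n := by
      have hterm : ∀ j : Fin n,
          (α j * ((2:ℝ) ^ (2 * (j : ℕ) * n) / 2 ^ (2 * n ^ 2)))^2 ≤ 2*(1/8:ℝ)^n := by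
        intro j
        have h32 : ((3/2:ℝ)^(n-1-(j:ℕ)))^2 = (9/4:ℝ)^(n-1-(j:ℕ)) := by
          rw [← pow_mul, mul_comm (n-1-(j:ℕ)) 2, pow_mul]
          norm_num
        calc (α j * ((2:ℝ) ^ (2 * (j : ℕ) * n) / 2 ^ (2 * n ^ 2)))^2
            = |α j|^2 * (((2:ℝ) ^ (2 * (j : ℕ) * n) / 2 ^ (2 * n ^ 2)))^2 := by
              rw [mul_pow, sq_abs]
          _ ≤ (K * (3/2:ℝ)^(n-1-(j:ℕ)))^2 *
                (((2:ℝ) ^ (2 * (j : ℕ) * n) / 2 ^ (2 * n ^ 2)))^2 :=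
              mul_le_mul_of_nonneg_right
                (pow_le_pow_left₀ (abs_nonneg _) (hαb j) 2) (sq_nonneg _)
          _ = (2:ℝ)^(n+1) * (9/4:ℝ)^(n-1-(j:ℕ)) *
                (((2:ℝ) ^ (2 * (j : ℕ) * n) / 2 ^ (2 * n ^ 2)))^2 := by
              rw [mul_pow, hK2, h32]
          _ ≤ 2*(1/8:ℝ)^n := per_term hn j
      calc ∑ j : Fin n, (α j * ((2:ℝ) ^ (2 * (j : ℕ) * n) / 2 ^ (2 * n ^ 2)))^2
          ≤ ∑ _j : Fin n, 2*(1/8:ℝ)^n := Finset.sum_le_sum fun j _ => hterm j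
        _ = n * (2*(1/8:ℝ)^n) := by
            rw [Finset.sum_const, Finset.card_univ, Fintype.card_fin, nsmul_eq_mul]
        _ ≤ ((1:ℝ)/2)^n := by
            have h4 := two_mul_le_four_pow n
            have he : (n:ℝ) * (2*(1/8:ℝ)^n) = (2*(n:ℝ)) * (1/8:ℝ)^n := by ring
            rw [he]
            calc (2*(n:ℝ))*(1/8:ℝ)^n ≤ 4^n * (1/8:ℝ)^n :=
                  mul_le_mul_of_nonneg_right h4 (by positivity)
              _ = ((1:ℝ)/2)^n := by rw [← mul_pow]; norm_num
    have hv'mem : (∑ i, α i • lifted B i) ∈ latticeOf (lifted B) := ⟨α0, rfl⟩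
    have hv'norm : ‖∑ i, α i • lifted B i‖^2 = ‖v‖^2 +
        ∑ j : Fin n, (α j * ((2:ℝ) ^ (2 * (j : ℕ) * n) / 2 ^ (2 * n ^ 2)))^2 := by
      rw [hvsum]; exact lift_norm B α
    have hvpos : 0 < ‖v‖ := norm_pos_iff.2 hvne
    have hTnn' : 0 ≤ ∑ j : Fin n,
        (α j * ((2:ℝ) ^ (2 * (j : ℕ) * n) / 2 ^ (2 * n ^ 2)))^2 :=
      Finset.sum_nonneg fun j _ => sq_nonneg _
    have hv'ne : (∑ i, α i • lifted B i) ≠ 0 := by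
      intro h0
      rw [h0, norm_zero] at hv'norm
      nlinarith
    have hlple : sInf S' ≤ ‖∑ i, α i • lifted B i‖ :=
      csInf_le hbddS' ⟨_, hv'mem, hv'ne, rfl⟩
    have hsq : sInf S' ^ 2 ≤ ‖∑ i, α i • lifted B i‖^2 := pow_le_pow_left₀ hlp0 hlple 2
    have hv2 : ‖v‖^2 ≤ (l1+ε)^2 := by nlinarith [norm_nonneg v]
    have hε1 : ε ≤ 1 := (min_le_right _ _).trans (min_le_left _ _)
    have hεδ : ε ≤ δ/(2*l1+2) := (min_le_right _ _).trans (min_le_right _ _)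
    have hδ2 : 2*l1*ε + ε^2 ≤ δ := by
      have h2l : (0:ℝ) < 2*l1+2 := by linarith
      have := (le_div_iff₀ h2l).1 hεδ
      nlinarith
    nlinarith [hsq, hv'norm, hT, hv2]
  calc sInf S' ^ 2 ≤ sInf S ^ 2 + ((1:ℝ)/2)^n := key
    _ ≤ sInf S ^ 2 + (2:ℝ)^(-(n:ℝ)/2) := by linarith

end
end

section
/- Let α, β ∈ ℤ^n satisfy |α_i| < 2^{3n/2} and |β_i| < 2^{3n/2} for all i, and suppose there exists an index i with |α_i| ≠ |β_i|. Then |Σ_{i=1}^n (α_i² − β_i²) · 2^{4(i-1)n}/2^{4n²}| ≥ 2^{-4n²}. -/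
/-- Digits bounded in absolute value by the base: if the number is 0, all digits are 0. -/
lemma digits_zero : ∀ (n : ℕ) (b : ℤ), 2 ≤ b → ∀ (d : Fin n → ℤ), (∀ i, |d i| < b) →
    (∑ i, d i * b ^ (i : ℕ)) = 0 → ∀ i, d i = 0 := by
  intro n
  induction n with
  | zero => intro b hb d hd hs i; exact absurd i.2 (by omega)
  | succ n ih =>
    intro b hb d hd hs
    rw [Fin.sum_univ_succ] at hs
    simp only [Fin.val_zero, pow_zero, mul_one] at hs
    have hdvd : b ∣ d 0 := by
      have h1 : b ∣ ∑ i : Fin n, d i.succ * b ^ (i.succ : ℕ) := by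
        apply Finset.dvd_sum
        intro i _
        exact Dvd.dvd.mul_left (dvd_pow_self b (by simp [Fin.val_succ])) _
      have h2 : d 0 = -(∑ i : Fin n, d i.succ * b ^ (i.succ : ℕ)) := by linarith
      rw [h2]
      exact dvd_neg.mpr h1
    have h0 : d 0 = 0 := Int.eq_zero_of_abs_lt_dvd hdvd (hd 0)
    have hs' : (∑ i : Fin n, d i.succ * b ^ (i : ℕ)) * b = 0 := by
      have : ∑ i : Fin n, d i.succ * b ^ (i.succ : ℕ)
          = (∑ i : Fin n, d i.succ * b ^ (i : ℕ)) * b := by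
        rw [Finset.sum_mul]
        apply Finset.sum_congr rfl
        intro i _
        rw [Fin.val_succ, pow_succ]
        ring
      rw [← this]
      linarith
    have hbne : b ≠ 0 := by omega
    have hsum0 : (∑ i : Fin n, d i.succ * b ^ (i : ℕ)) = 0 := by
      rcases mul_eq_zero.mp hs' with h | h
      · exact h
      · exact absurd h hbne
    have hall : ∀ i : Fin n, d i.succ = 0 :=
      ih b hb (fun i => d i.succ) (fun i => hd i.succ) hsum0
    intro i
    refine Fin.cases ?_ ?_ i
    · exact h0
    · exact hall

/-- If `α, β ∈ ℤⁿ` satisfy `|αᵢ| < 2^{3n/2}` and `|βᵢ| < 2^{3n/2}` for all `i`,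
and `|αᵢ| ≠ |βᵢ|` for some `i`, then
`|∑ᵢ (αᵢ² - βᵢ²) · 2^{4(i-1)n} / 2^{4n²}| ≥ 2^{-4n²}`
(the index `i : Fin n` is zero-based, corresponding to `i-1` in one-based notation). -/
theorem stmt3 {n : ℕ} (hn : 1 ≤ n) (α β : Fin n → ℤ)
    (hα : ∀ i, (|α i| : ℝ) < (2 : ℝ) ^ (3 * (n : ℝ) / 2))
    (hβ : ∀ i, (|β i| : ℝ) < (2 : ℝ) ^ (3 * (n : ℝ) / 2))
    (hne : ∃ i, |α i| ≠ |β i|) :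
    ((2 : ℝ) ^ (4 * n ^ 2))⁻¹ ≤
      |∑ i : Fin n, ((α i : ℝ) ^ 2 - (β i : ℝ) ^ 2) *
        ((2 : ℝ) ^ (4 * (i : ℕ) * n) / (2 : ℝ) ^ (4 * n ^ 2))| := by
  -- squares are bounded by 2^(3n) in ℤ
  have hsq : ∀ (γ : Fin n → ℤ), (∀ i, (|γ i| : ℝ) < (2 : ℝ) ^ (3 * (n : ℝ) / 2)) →
      ∀ i, γ i ^ 2 < 2 ^ (3 * n) := by
    intro γ hγ i
    have h1 : (|γ i| : ℝ) ^ 2 < ((2 : ℝ) ^ (3 * (n : ℝ) / 2)) ^ 2 :=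
      pow_lt_pow_left₀ (hγ i) (by positivity) two_ne_zero
    have h2 : ((2 : ℝ) ^ (3 * (n : ℝ) / 2)) ^ 2 = (2 : ℝ) ^ (3 * n : ℕ) := by
      rw [← Real.rpow_natCast ((2 : ℝ) ^ (3 * (n : ℝ) / 2)) 2,
        ← Real.rpow_mul (by norm_num)]
      rw [← Real.rpow_natCast 2 (3 * n)]
      congr 1
      push_cast
      ring
    rw [h2] at h1
    have h3 : ((γ i : ℝ)) ^ 2 < (2 : ℝ) ^ (3 * n : ℕ) := by
      rwa [sq_abs] at h1
    exact_mod_cast h3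
  have hα2 := hsq α hα
  have hβ2 := hsq β hβ
  set d : Fin n → ℤ := fun i => α i ^ 2 - β i ^ 2 with hd
  have hdb : ∀ i, |d i| < 2 ^ (4 * n) := by
    intro i
    have h34 : (2 : ℤ) ^ (3 * n) ≤ 2 ^ (4 * n) :=
      pow_le_pow_right₀ (by norm_num) (by omega)
    have na : 0 ≤ α i ^ 2 := sq_nonneg _
    have nb : 0 ≤ β i ^ 2 := sq_nonneg _
    have ha := hα2 i
    have hb := hβ2 i
    rw [abs_sub_lt_iff]
    constructor <;> omega
  set T : ℤ := ∑ i : Fin n, d i * (2 ^ (4 * n)) ^ (i : ℕ) with hT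
  have hTne : T ≠ 0 := by
    intro h0
    obtain ⟨j, hj⟩ := hne
    have := digits_zero n (2 ^ (4 * n)) (by
        calc (2:ℤ) = 2 ^ 1 := (pow_one 2).symm
        _ ≤ 2 ^ (4 * n) := pow_le_pow_right₀ (by norm_num) (by omega)) d hdb h0 j
    have : α j ^ 2 = β j ^ 2 := by simp [hd] at this; linarith
    exact hj ((sq_eq_sq_iff_abs_eq_abs (α j) (β j)).mp this)
  have hT1 : (1 : ℝ) ≤ |(T : ℝ)| := by
    rw [← Int.cast_abs]
    exact_mod_cast Int.one_le_abs hTne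
  have hDpos : (0 : ℝ) < (2 : ℝ) ^ (4 * n ^ 2) := by positivity
  have hkey : ∑ i : Fin n, ((α i : ℝ) ^ 2 - (β i : ℝ) ^ 2) *
      ((2 : ℝ) ^ (4 * (i : ℕ) * n) / (2 : ℝ) ^ (4 * n ^ 2))
      = (T : ℝ) / (2 : ℝ) ^ (4 * n ^ 2) := by
    rw [hT, Int.cast_sum, Finset.sum_div]
    apply Finset.sum_congr rfl
    intro i _
    push_cast [hd]
    rw [← pow_mul]
    ring_nf
  rw [hkey, abs_div, abs_of_pos hDpos]
  rw [inv_eq_one_div]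
  gcongr
end

section
/- Let b_1, …, b_n ∈ ℝ^m be linearly independent, let η be an integer with η ≥ n, and define the perturbed vectors b_i'' = b_i + (2^{2(i-1)η}/2^{2η²}) · 𝟙, where 𝟙 ∈ ℝ^m is the all-ones vector. If v = Σ_{i=1}^n α_i b_i with α ∈ ℤ^n and |α_i| < 2^η for all i, then ‖Σ_{i=1}^n α_i b_i''‖_∞ ≤ ‖v‖_∞ + 2^{1-η}, where ‖·‖_∞ denotes the ℓ∞ (maximum absolute coordinate) norm. -/
/-- Let `b₁, …, bₙ ∈ ℝ^m` (with the ℓ∞ norm, which is the norm on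
`Fin m → ℝ`) be linearly independent, `η ≥ n` an integer, and
`bᵢ'' = bᵢ + (2^{2(i-1)η}/2^{2η²}) • 𝟙` the perturbed vectors (zero-based index
`i : Fin n` corresponds to `i-1`). If `v = ∑ αᵢ bᵢ` with `α ∈ ℤⁿ` and `|αᵢ| < 2^η`
for all `i`, then `‖∑ αᵢ bᵢ''‖∞ ≤ ‖v‖∞ + 2^{1-η}`. -/
theorem stmt6 {m n : ℕ} (b : Fin n → (Fin m → ℝ)) (hb : LinearIndependent ℝ b)
    (η : ℤ) (hη : (n : ℤ) ≤ η) (α : Fin n → ℤ)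
    (hα : ∀ i, (|α i| : ℝ) < (2 : ℝ) ^ η) :
    ‖∑ i, (α i : ℝ) •
        (b i + ((2 : ℝ) ^ (2 * ((i : ℕ) : ℤ) * η) / (2 : ℝ) ^ (2 * η ^ 2)) •
          (fun _ => 1 : Fin m → ℝ))‖ ≤
      ‖∑ i, (α i : ℝ) • b i‖ + (2 : ℝ) ^ (1 - η) := by
  rcases Nat.eq_zero_or_pos n with hn | hn
  · subst hn
    simp only [Finset.univ_eq_empty, Finset.sum_empty, norm_zero]
    positivity
  have hη1 : (1 : ℤ) ≤ η := le_trans (by exact_mod_cast hn) hη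
  set u : Fin m → ℝ := fun _ => 1 with hu
  set d : Fin n → ℝ :=
    fun i => (2 : ℝ) ^ (2 * ((i : ℕ) : ℤ) * η) / (2 : ℝ) ^ (2 * η ^ 2) with hd
  have hsplit : ∑ i, (α i : ℝ) • (b i + d i • u)
      = (∑ i, (α i : ℝ) • b i) + (∑ i, (α i : ℝ) * d i) • u := by
    rw [Finset.sum_smul]
    rw [← Finset.sum_add_distrib]
    congr 1
    funext i
    rw [smul_add, smul_smul]
  rw [hsplit]
  refine (norm_add_le _ _).trans (add_le_add_right ?_ _)
  rw [norm_smul]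
  have hu1 : ‖u‖ ≤ 1 := by
    refine (pi_norm_le_iff_of_nonneg zero_le_one).2 fun i => ?_
    simp [hu]
  have hs : ‖∑ i, (α i : ℝ) * d i‖ ≤ (2 : ℝ) ^ (1 - η) := by
    rw [Real.norm_eq_abs]
    refine (Finset.abs_sum_le_sum_abs _ _).trans ?_
    have hterm : ∀ i : Fin n,
        |(α i : ℝ) * d i| ≤ (2 : ℝ) ^ (1 - η) * (1 / 2 : ℝ) ^ (n - 1 - (i : ℕ)) / 2 := by
      intro i
      have hdpos : (0 : ℝ) < d i := by
        rw [hd]; positivity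
      have h1 : |(α i : ℝ) * d i| ≤ (2 : ℝ) ^ η * d i := by
        rw [abs_mul, abs_of_pos hdpos]
        exact mul_le_mul_of_nonneg_right (le_of_lt (by exact_mod_cast hα i)) hdpos.le
      refine h1.trans ?_
      have hde : (2 : ℝ) ^ η * d i =
          (2 : ℝ) ^ (η + 2 * ((i : ℕ) : ℤ) * η - 2 * η ^ 2) := by
        rw [hd, zpow_sub₀ (two_ne_zero), zpow_add₀ (two_ne_zero)]
        ring
      rw [hde]
      have hk2 : ((1 / 2 : ℝ)) ^ (n - 1 - (i : ℕ)) =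
          (2 : ℝ) ^ (-((n - 1 - (i : ℕ) : ℕ) : ℤ)) := by
        rw [zpow_neg, zpow_natCast, one_div, inv_pow]
      have hrhs : (2 : ℝ) ^ (1 - η) * (1 / 2 : ℝ) ^ (n - 1 - (i : ℕ)) / 2 =
          (2 : ℝ) ^ ((1 - η) + -((n - 1 - (i : ℕ) : ℕ) : ℤ) + -1) := by
        rw [hk2, zpow_add₀ (two_ne_zero : (2:ℝ) ≠ 0),
          zpow_add₀ (two_ne_zero : (2:ℝ) ≠ 0)]
        simp only [zpow_neg, zpow_one]
        ring
      rw [hrhs]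
      apply zpow_le_zpow_right₀ (by norm_num)
      -- exponent inequality
      have hi : ((i : ℕ) : ℤ) < (n : ℤ) := by exact_mod_cast i.isLt
      have hk : ((n - 1 - (i : ℕ) : ℕ) : ℤ) = (n : ℤ) - 1 - ((i : ℕ) : ℤ) := by
        have h1 : (i : ℕ) ≤ n - 1 := Nat.le_sub_one_of_lt i.isLt
        omega
      rw [hk]
      nlinarith [hi, hη, hη1, sq_nonneg (η - (n : ℤ)),
        mul_le_mul_of_nonneg_left hη (by positivity : (0:ℤ) ≤ 2 * η)]
    refine (Finset.sum_le_sum fun i _ => hterm i).trans ?_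
    have : ∑ i : Fin n, (2 : ℝ) ^ (1 - η) * (1 / 2 : ℝ) ^ (n - 1 - (i : ℕ)) / 2
        = (2 : ℝ) ^ (1 - η) / 2 * ∑ j ∈ Finset.range n, (1 / 2 : ℝ) ^ j := by
      rw [Fin.sum_univ_eq_sum_range
        (fun j => (2 : ℝ) ^ (1 - η) * (1 / 2 : ℝ) ^ (n - 1 - j) / 2) n]
      rw [Finset.sum_range_reflect (fun j => (2 : ℝ) ^ (1 - η) * (1 / 2 : ℝ) ^ j / 2) n]
      rw [Finset.mul_sum]
      apply Finset.sum_congr rfl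
      intro j hj
      ring
    rw [this]
    have hgeo : ∑ j ∈ Finset.range n, (1 / 2 : ℝ) ^ j ≤ 2 := sum_geometric_two_le n
    have hpos : (0 : ℝ) < (2 : ℝ) ^ (1 - η) := by positivity
    calc (2 : ℝ) ^ (1 - η) / 2 * ∑ j ∈ Finset.range n, (1 / 2 : ℝ) ^ j
        ≤ (2 : ℝ) ^ (1 - η) / 2 * 2 := by
          exact mul_le_mul_of_nonneg_left hgeo (by positivity)
      _ = (2 : ℝ) ^ (1 - η) := by ring
  calc ‖∑ i, (α i : ℝ) * d i‖ * ‖u‖ ≤ (2 : ℝ) ^ (1 - η) * 1 := by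
        exact mul_le_mul hs hu1 (norm_nonneg _) (by positivity)
    _ = (2 : ℝ) ^ (1 - η) := mul_one _
end

section
/- Let L = L(B) be a lattice of rank n generated by a basis B = (b_1, …, b_n) of linearly independent vectors in ℝ^m. Then the set {v ∈ L : ‖v‖ = λ1(L)} has cardinality at most 2^{n+1}. -/
noncomputable section

lemma parity_key {m n : ℕ} (B : Fin n → EuclideanSpace ℝ (Fin m))
    (lam : ℝ) (hlow : ∀ u ∈ latticeOf B, u ≠ 0 → lam ≤ ‖u‖)
    (v w : EuclideanSpace ℝ (Fin m)) (x y : Fin n → ℤ)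
    (hv : v = ∑ i, (x i : ℝ) • B i) (hw : w = ∑ i, (y i : ℝ) • B i)
    (hnv : ‖v‖ = lam) (hnw : ‖w‖ = lam)
    (hxy : ∀ i, ((x i : ℤ) : ZMod 2) = ((y i : ℤ) : ZMod 2)) :
    v = w ∨ v = -w := by
  have hdvd : ∀ i, (2 : ℤ) ∣ (x i - y i) := by
    intro i
    have : ((x i - y i : ℤ) : ZMod 2) = 0 := by push_cast; rw [hxy i]; ring
    exact (ZMod.intCast_zmod_eq_zero_iff_dvd _ 2).mp this
  set z : Fin n → ℤ := fun i => (x i - y i) / 2 with hz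
  have h2 : ∀ i, 2 * z i = x i - y i := fun i => Int.mul_ediv_cancel' (hdvd i)
  set u₁ : EuclideanSpace ℝ (Fin m) := ∑ i, ((z i : ℤ) : ℝ) • B i with hu1
  set u₂ : EuclideanSpace ℝ (Fin m) := ∑ i, (((z i + y i : ℤ)) : ℝ) • B i with hu2
  have hu1L : u₁ ∈ latticeOf B := ⟨z, rfl⟩
  have h2u1 : (2 : ℝ) • u₁ = v - w := by
    rw [hu1, Finset.smul_sum, hv, hw, ← Finset.sum_sub_distrib]
    refine Finset.sum_congr rfl fun i _ => ?_
    rw [smul_smul, ← sub_smul]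
    have := h2 i
    exact_mod_cast congrArg (fun t : ℤ => (t : ℝ) • B i) (h2 i)
  have h2u2 : (2 : ℝ) • u₂ = v + w := by
    rw [hu2, Finset.smul_sum, hv, hw, ← Finset.sum_add_distrib]
    refine Finset.sum_congr rfl fun i _ => ?_
    rw [smul_smul, ← add_smul]
    have := h2 i
    exact_mod_cast congrArg (fun t : ℤ => (t : ℝ) • B i)
      (by linarith : 2 * (z i + y i) = x i + y i)
  have hnsub : ‖v - w‖ = 2 * ‖u₁‖ := by
    rw [← h2u1, norm_smul]; simp
  have hnadd : ‖v + w‖ = 2 * ‖u₂‖ := by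
    rw [← h2u2, norm_smul]; simp
  have hlam : 0 ≤ lam := hnv ▸ norm_nonneg v
  have hpar := parallelogram_law_with_norm ℝ v w
  rw [hnsub, hnadd, hnv, hnw] at hpar
  by_cases hu10 : u₁ = 0
  · left
    have : v - w = 0 := by rw [← h2u1, hu10, smul_zero]
    exact sub_eq_zero.mp this
  · right
    have hle := hlow u₁ hu1L hu10
    have hu2n : ‖u₂‖ = 0 := by nlinarith [norm_nonneg u₁, norm_nonneg u₂, hle, hlam, sq_nonneg (‖u₁‖ - lam), mul_self_nonneg ‖u₂‖]
    have : v + w = 0 := by rw [← h2u2, norm_eq_zero.mp hu2n, smul_zero]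
    exact eq_neg_of_add_eq_zero_left this

/-- The set of shortest nonzero vectors of a lattice of rank `n`
is finite with at most `2^{n+1}` elements. -/
theorem stmt7 {m n : ℕ} (B : Fin n → EuclideanSpace ℝ (Fin m))
    (hB : LinearIndependent ℝ B) :
    {v ∈ latticeOf B | ‖v‖ = lambda1 (latticeOf B)}.Finite ∧
    {v ∈ latticeOf B | ‖v‖ = lambda1 (latticeOf B)}.ncard ≤ 2 ^ (n + 1) := by
  classical
  set L := latticeOf B with hLdef
  set S := {v ∈ L | ‖v‖ = lambda1 L} with hSdef
  have hlow : ∀ u ∈ L, u ≠ 0 → lambda1 L ≤ ‖u‖ := by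
    intro u hu hu0
    apply csInf_le
    · exact ⟨0, fun r ⟨v, _, _, hv⟩ => hv ▸ norm_nonneg v⟩
    · exact ⟨u, hu, hu0, rfl⟩
  by_cases h0 : lambda1 L = 0
  · have hsub : S ⊆ {0} := by
      intro v hv
      obtain ⟨-, hn⟩ := hv
      have : ‖v‖ = 0 := by rw [hn, h0]
      simpa using norm_eq_zero.mp this
    refine ⟨(Set.finite_singleton 0).subset hsub, ?_⟩
    calc S.ncard ≤ ({0} : Set (EuclideanSpace ℝ (Fin m))).ncard :=
          Set.ncard_le_ncard hsub (Set.finite_singleton 0)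
      _ = 1 := Set.ncard_singleton 0
      _ ≤ 2 ^ (n + 1) := Nat.one_le_two_pow
  · -- parity map
    set F : EuclideanSpace ℝ (Fin m) → (Fin n → ZMod 2) := fun v =>
      if h : v ∈ L then (fun i => ((Classical.choose h i : ℤ) : ZMod 2)) else 0 with hF
    have hkey : ∀ v ∈ S, ∀ w ∈ S, F v = F w → v = w ∨ v = -w := by
      intro v hv w hw hFvw
      obtain ⟨hvL, hvn⟩ := hv
      obtain ⟨hwL, hwn⟩ := hw
      have hxv := Classical.choose_spec hvL
      have hxw := Classical.choose_spec hwL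
      refine parity_key B (lambda1 L) hlow v w _ _ hxv hxw hvn hwn ?_
      intro i
      have := congrFun hFvw i
      simp only [hF, dif_pos hvL, dif_pos hwL] at this
      exact this
    have hfin : S.Finite := by
      have hsub : S ⊆ ⋃ p : Fin n → ZMod 2, {v ∈ S | F v = p} :=
        fun v hv => Set.mem_iUnion.mpr ⟨F v, hv, rfl⟩
      refine Set.Finite.subset (Set.finite_iUnion fun p => ?_) hsub
      rcases Set.eq_empty_or_nonempty {v ∈ S | F v = p} with h | ⟨a, ha, hFa⟩
      · rw [h]; exact Set.finite_empty
      · refine Set.Finite.subset ((Set.finite_singleton (-a)).insert a) ?_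
        rintro b ⟨hbS, hFb⟩
        rcases hkey b hbS a ha (hFb.trans hFa.symm) with h | h
        · exact Set.mem_insert_iff.mpr (Or.inl h)
        · exact Set.mem_insert_iff.mpr (Or.inr (by simp [h]))
    refine ⟨hfin, ?_⟩
    rw [Set.ncard_eq_toFinset_card S hfin]
    have hmain : hfin.toFinset.card ≤ 2 * (hfin.toFinset.image F).card := by
      apply Finset.card_le_mul_card_image
      intro p hp
      obtain ⟨a, ha, hFa⟩ := Finset.mem_image.mp hp
      have haS : a ∈ S := hfin.mem_toFinset.mp ha
      have hsub : hfin.toFinset.filter (fun v => F v = p) ⊆ {a, -a} := by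
        intro b hb
        obtain ⟨hbF, hFb⟩ := Finset.mem_filter.mp hb
        have hbS : b ∈ S := hfin.mem_toFinset.mp hbF
        rcases hkey b hbS a haS (hFb.trans hFa.symm) with h | h
        · exact Finset.mem_insert.mpr (Or.inl h)
        · exact Finset.mem_insert.mpr (Or.inr (by simp [h]))
      calc (hfin.toFinset.filter (fun v => F v = p)).card
          ≤ ({a, -a} : Finset (EuclideanSpace ℝ (Fin m))).card := Finset.card_le_card hsub
        _ ≤ 2 := Finset.card_insert_le _ _ |>.trans (by simp)
    calc hfin.toFinset.card ≤ 2 * (hfin.toFinset.image F).card := hmain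
      _ ≤ 2 * Fintype.card (Fin n → ZMod 2) := by
          exact Nat.mul_le_mul_left 2 (Finset.card_le_univ _)
      _ = 2 ^ (n + 1) := by simp [Fintype.card_fun]; ring

end
end

section
/- Let B = (b_1, …, b_n) be a basis of linearly independent vectors in ℝ^m, and let u = Σ_{i=1}^n α_i b_i and v = Σ_{i=1}^n β_i b_i (with α, β ∈ ℤ^n) be vectors of L(B) with ‖u‖ = ‖v‖ = λ1(L(B)) and u ≠ ±v. Then there exists an index i such that α_i ≢ β_i (mod 2). -/
noncomputable section

/-- If `u = ∑ αᵢ bᵢ` and `v = ∑ βᵢ bᵢ` are shortest nonzero vectors of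
`L(B)` with `u ≠ ±v`, then some coefficient pair differs mod 2. -/
theorem stmt8 {m n : ℕ} (B : Fin n → EuclideanSpace ℝ (Fin m))
    (hB : LinearIndependent ℝ B) (α β : Fin n → ℤ)
    (hu : ‖∑ i, (α i : ℝ) • B i‖ = lambda1 (latticeOf B))
    (hv : ‖∑ i, (β i : ℝ) • B i‖ = lambda1 (latticeOf B))
    (hne : (∑ i, (α i : ℝ) • B i) ≠ ∑ i, (β i : ℝ) • B i)
    (hne' : (∑ i, (α i : ℝ) • B i) ≠ -∑ i, (β i : ℝ) • B i) :
    ∃ i : Fin n, ¬ (α i ≡ β i [ZMOD 2]) := by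
  by_contra h
  push_neg at h
  set u := ∑ i, (α i : ℝ) • B i with hu_def
  set v := ∑ i, (β i : ℝ) • B i with hv_def
  -- get integer coefficients for (u - v)/2
  have hdvd : ∀ i, 2 ∣ α i - β i := by
    intro i
    exact (h i).symm.dvd
  choose γ hγ using hdvd
  have hw_eq : ∑ i, (γ i : ℝ) • B i = (2⁻¹ : ℝ) • (u - v) := by
    rw [hu_def, hv_def, ← Finset.sum_sub_distrib, Finset.smul_sum]
    apply Finset.sum_congr rfl
    intro i _
    rw [← sub_smul, smul_smul]
    congr 1
    have h2 : ((α i : ℝ) - (β i : ℝ)) = 2 * (γ i : ℝ) := by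
      exact_mod_cast hγ i
    rw [h2]; ring
  set w : EuclideanSpace ℝ (Fin m) := ∑ i, (γ i : ℝ) • B i with hw_def
  have hwL : w ∈ latticeOf B := ⟨γ, rfl⟩
  have huv_ne : u - v ≠ 0 := sub_ne_zero.mpr hne
  have hw_ne : w ≠ 0 := by
    rw [hw_eq]
    simp only [ne_eq, smul_eq_zero, inv_eq_zero, OfNat.ofNat_ne_zero, false_or]
    exact huv_ne
  -- λ1 ≤ ‖w‖
  have hbdd : BddBelow {r | ∃ x ∈ latticeOf B, x ≠ 0 ∧ ‖x‖ = r} := by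
    refine ⟨0, ?_⟩
    rintro r ⟨x, _, _, rfl⟩
    exact norm_nonneg x
  have hle : lambda1 (latticeOf B) ≤ ‖w‖ :=
    csInf_le hbdd ⟨w, hwL, hw_ne, rfl⟩
  -- parallelogram: ‖w‖ < λ1
  have hpar := parallelogram_law_with_norm ℝ u v
  have hupv : (0:ℝ) < ‖u + v‖ := by
    have : u + v ≠ 0 := by
      intro hc
      exact hne' (by rw [eq_neg_iff_add_eq_zero]; exact hc)
    exact norm_pos_iff.mpr this
  have hl1 : (0:ℝ) ≤ lambda1 (latticeOf B) := hu ▸ norm_nonneg u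
  have hwnorm : ‖w‖ = 2⁻¹ * ‖u - v‖ := by
    rw [hw_eq, norm_smul]
    simp
  have hlt : ‖w‖ < lambda1 (latticeOf B) := by
    rw [hwnorm]
    nlinarith [norm_nonneg (u - v), hu, hv, hpar, hupv, hl1]
  linarith

end
end

section
/- Let L be a lattice of rank n ≥ 2 in ℝ^m with λ2(L) ≥ γ·λ1(L) for some real γ > 0, and let v ∈ L be a primitive vector with ‖v‖ ≠ λ1(L). Then there exists w ∈ L such that P_v w ≠ 0 and ‖P_v w‖ ≤ ‖v‖/γ. -/
noncomputable section

/-- `v` is a primitive vector of the lattice `L`: it is a nonzero element of `L` that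
is not of the form `k • w` with `w ∈ L` and `|k| ≥ 2`. -/
def IsPrimitive {m : ℕ} (L : Set (EuclideanSpace ℝ (Fin m)))
    (v : EuclideanSpace ℝ (Fin m)) : Prop :=
  v ∈ L ∧ v ≠ 0 ∧ ∀ w ∈ L, ∀ k : ℤ, 2 ≤ |k| → v ≠ (k : ℝ) • w

/-- `projPerp v w`: the orthogonal projection of `w` onto the orthogonal complement of
the line spanned by `v`. -/
def projPerp {m : ℕ} (v w : EuclideanSpace ℝ (Fin m)) : EuclideanSpace ℝ (Fin m) :=
  (Submodule.orthogonalProjection ((Submodule.span ℝ {v})ᗮ) w : EuclideanSpace ℝ (Fin m))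

/-- Membership in `latticeOf B` is membership in the `ℤ`-span of the range of `B`. -/
lemma latticeOf_eq_span {m n : ℕ} (B : Fin n → EuclideanSpace ℝ (Fin m)) :
    latticeOf B = (Submodule.span ℤ (Set.range B) : Set (EuclideanSpace ℝ (Fin m))) := by
  ext w
  simp only [latticeOf, Set.mem_setOf_eq, SetLike.mem_coe, Submodule.mem_span_range_iff_exists_fun]
  constructor
  · rintro ⟨x, rfl⟩
    exact ⟨x, by simp_rw [← Int.cast_smul_eq_zsmul ℝ]⟩
  · rintro ⟨c, rfl⟩
    exact ⟨c, by simp_rw [← Int.cast_smul_eq_zsmul ℝ]⟩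

/-- Intersection of the lattice with a closed ball is finite. -/
lemma latticeOf_inter_ball_finite {m n : ℕ} (B : Fin n → EuclideanSpace ℝ (Fin m))
    (hB : LinearIndependent ℝ B) (R : ℝ) :
    (latticeOf B ∩ Metric.closedBall 0 R).Finite := by
  classical
  have hsr : LinearIndepOn ℝ id (Set.range B) :=
    (linearIndepOn_id_range_iff hB.injective).mpr hB
  let bext := Module.Basis.extend hsr
  haveI : Fintype (hsr.extend (Set.subset_univ _)) := FiniteDimensional.fintypeBasisIndex bext
  have hrange : Set.range (⇑bext) = hsr.extend (Set.subset_univ _) := by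
    rw [Module.Basis.coe_extend, Subtype.range_coe]
  have hdisc_big : DiscreteTopology
      (Submodule.span ℤ (Set.range (⇑bext)) : Set (EuclideanSpace ℝ (Fin m))) :=
    inferInstanceAs (DiscreteTopology (Submodule.span ℤ (Set.range (⇑bext))))
  have hsub : latticeOf B ⊆
      (Submodule.span ℤ (Set.range (⇑bext)) : Set (EuclideanSpace ℝ (Fin m))) := by
    rw [latticeOf_eq_span]
    exact Submodule.span_mono (by rw [hrange]; exact hsr.subset_extend _)
  have hdiscL : DiscreteTopology (latticeOf B) := DiscreteTopology.of_subset hdisc_big hsub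
  have hclosed : IsClosed (latticeOf B) := by
    rw [latticeOf_eq_span]
    haveI : DiscreteTopology ((Submodule.span ℤ (Set.range B)).toAddSubgroup) := by
      refine DiscreteTopology.of_subset hdisc_big
        (t := ((Submodule.span ℤ (Set.range B)).toAddSubgroup : Set _)) ?_
      intro x hx
      apply hsub
      rw [latticeOf_eq_span]
      exact hx
    rw [← Submodule.coe_toAddSubgroup]
    exact AddSubgroup.isClosed_of_discrete
  have hcompact : IsCompact (latticeOf B ∩ Metric.closedBall 0 R) :=
    Metric.isCompact_of_isClosed_isBounded (hclosed.inter Metric.isClosed_closedBall)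
      (Metric.isBounded_closedBall.subset Set.inter_subset_right)
  exact hcompact.finite (isDiscrete_iff_discreteTopology.mpr (DiscreteTopology.of_subset hdiscL Set.inter_subset_left))

/-- If `L` is a lattice of rank `n ≥ 2` with `λ₂(L) ≥ γ·λ₁(L)` for some
`γ > 0`, and `v ∈ L` is a primitive vector with `‖v‖ ≠ λ₁(L)`, then there is `w ∈ L`
whose projection orthogonal to `v` is nonzero and of norm at most `‖v‖/γ`. -/
theorem stmt9 {m n : ℕ} (hn : 2 ≤ n) (B : Fin n → EuclideanSpace ℝ (Fin m))
    (hB : LinearIndependent ℝ B) (γ : ℝ) (hγ : 0 < γ)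
    (hgap : γ * lambda1 (latticeOf B) ≤ lambda2 (latticeOf B))
    (v : EuclideanSpace ℝ (Fin m)) (hv : IsPrimitive (latticeOf B) v)
    (hvne : ‖v‖ ≠ lambda1 (latticeOf B)) :
    ∃ w ∈ latticeOf B, projPerp v w ≠ 0 ∧ ‖projPerp v w‖ ≤ ‖v‖ / γ := by
  classical
  obtain ⟨hvL, hv0, hprim⟩ := hv
  set L := latticeOf B with hLdef
  have hvpos : 0 < ‖v‖ := norm_pos_iff.mpr hv0
  -- λ₁ ≤ ‖v‖ and hence λ₁ < ‖v‖
  have hbdd : BddBelow {r | ∃ u ∈ L, u ≠ 0 ∧ ‖u‖ = r} := by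
    refine ⟨0, ?_⟩
    rintro r ⟨u, _, _, rfl⟩
    exact norm_nonneg u
  have h1 : lambda1 L ≤ ‖v‖ := csInf_le hbdd ⟨v, hvL, hv0, rfl⟩
  have hlt : lambda1 L < ‖v‖ := lt_of_le_of_ne h1 fun h => hvne h.symm
  -- a shortest nonzero lattice vector
  have hTfin : ({u | u ∈ L ∧ u ≠ 0 ∧ ‖u‖ ≤ ‖v‖}).Finite := by
    refine (latticeOf_inter_ball_finite B hB ‖v‖).subset ?_
    rintro u ⟨huL, _, hun⟩
    exact ⟨huL, by simpa [Metric.mem_closedBall, dist_zero_right] using hun⟩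
  obtain ⟨u, ⟨huL, hu0, huv'⟩, hmin⟩ :=
    Set.exists_min_image _ (fun u => ‖u‖) hTfin ⟨v, hvL, hv0, le_refl _⟩
  have hu_eq : ‖u‖ = lambda1 L := by
    refine le_antisymm ?_ (csInf_le hbdd ⟨u, huL, hu0, rfl⟩)
    refine le_csInf ⟨‖v‖, v, hvL, hv0, rfl⟩ ?_
    rintro r ⟨w, hwL, hw0, rfl⟩
    by_cases hw : ‖w‖ ≤ ‖v‖
    · exact hmin w ⟨hwL, hw0, hw⟩
    · exact le_trans huv' (le_of_lt (not_le.mp hw))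
  have huv : ‖u‖ < ‖v‖ := hu_eq ▸ hlt
  -- u is not a real multiple of v
  have hns : u ∉ Submodule.span ℝ {v} := by
    intro hmem
    rw [Submodule.mem_span_singleton] at hmem
    obtain ⟨c, hc⟩ := hmem
    have hc0 : c ≠ 0 := by rintro rfl; simp at hc; exact hu0 hc.symm
    have habs : |c| < 1 := by
      have h2 : ‖c • v‖ < ‖v‖ := by rw [hc]; exact huv
      rw [norm_smul, Real.norm_eq_abs] at h2
      nlinarith
    obtain ⟨x, hx⟩ := huL
    obtain ⟨y, hy⟩ := hvL
    -- coordinatewise: x i = c * y i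
    have hcoord : ∀ i, (x i : ℝ) = c * y i := by
      have hsum : ∑ i, ((x i : ℝ) - c * y i) • B i = 0 := by
        simp_rw [sub_smul, Finset.sum_sub_distrib, mul_smul]
        rw [← Finset.smul_sum, ← hx, ← hy, hc, sub_self]
      intro i
      have h3 := (Fintype.linearIndependent_iff.mp hB) _ hsum i
      linarith
    obtain ⟨j, hj⟩ : ∃ j, y j ≠ 0 := by
      by_contra h
      push_neg at h
      apply hv0
      rw [hy]
      simp [h]
    have hyj : (y j : ℝ) ≠ 0 := Int.cast_ne_zero.mpr hj
    set q0 : ℚ := (x j : ℚ) / (y j : ℚ) with hq0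
    have hcq : c = (q0 : ℝ) := by
      have h4 := hcoord j
      rw [hq0]
      push_cast
      rw [eq_div_iff hyj]
      linarith
    have hrat : ∀ i, q0 * (y i : ℚ) = (x i : ℚ) := by
      intro i
      have h2 : ((q0 * (y i : ℚ) : ℚ) : ℝ) = (((x i : ℚ) : ℚ) : ℝ) := by
        push_cast
        rw [← hcq]
        linarith [hcoord i]
      exact_mod_cast h2
    have hdenne : ((q0.den : ℚ)) ≠ 0 := by
      exact_mod_cast q0.den_pos.ne'
    have hnd : q0 * (q0.den : ℚ) = (q0.num : ℚ) := by
      rw [← eq_div_iff hdenne]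
      exact (Rat.num_div_den q0).symm
    -- denominator divides all y i
    have hden : ∀ i, (q0.den : ℤ) ∣ y i := by
      intro i
      have hmul : q0.num * y i = (q0.den : ℤ) * x i := by
        have h2 : ((q0.num * y i : ℤ) : ℚ) = (((q0.den : ℤ) * x i : ℤ) : ℚ) := by
          push_cast
          rw [← hnd, ← hrat i]
          ring
        exact_mod_cast h2
      have hcop : IsCoprime ((q0.den : ℤ)) q0.num := by
        rw [Int.isCoprime_iff_gcd_eq_one]
        simpa [Int.gcd, Nat.Coprime, Nat.gcd_comm] using q0.reduced
      exact hcop.dvd_of_dvd_mul_right ⟨x i, by rw [mul_comm (y i) q0.num, hmul]⟩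
    by_cases hd1 : q0.den = 1
    · -- then c is a nonzero integer with |c| < 1, contradiction
      have h5 : q0 = (q0.num : ℚ) := by
        rw [hd1] at hnd
        simpa using hnd
      have hcz : c = (q0.num : ℝ) := by rw [hcq]; exact_mod_cast h5
      have hnum0 : q0.num ≠ 0 := by
        intro h
        apply hc0
        rw [hcz, h]; simp
      have h6 : (1 : ℝ) ≤ |c| := by
        rw [hcz, ← Int.cast_abs]
        exact_mod_cast Int.one_le_abs hnum0
      linarith
    · -- then v = den • w contradicts primitivity
      have hd2 : 2 ≤ (q0.den : ℤ) := by
        have h := q0.den_pos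
        have : 2 ≤ q0.den := by omega
        exact_mod_cast this
      choose z hz using hden
      refine hprim (∑ i, (z i : ℝ) • B i) ⟨z, rfl⟩ (q0.den : ℤ) ?_ ?_
      · rw [abs_of_nonneg (by positivity)]
        exact hd2
      · rw [hy, Finset.smul_sum]
        refine Finset.sum_congr rfl fun i _ => ?_
        rw [smul_smul]
        congr 1
        rw [hz i]
        push_cast
        ring
  -- the projection of u is nonzero
  have hproj_ne : projPerp v u ≠ 0 := by
    intro h
    apply hns
    have h0 : Submodule.orthogonalProjection ((Submodule.span ℝ {v})ᗮ) u = 0 := by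
      rw [← Submodule.coe_eq_zero]
      exact h
    have h7 := Submodule.orthogonalProjectionOnto_eq_zero_iff.mp h0
    rwa [Submodule.orthogonal_orthogonal] at h7
  -- λ₂ ≤ ‖v‖
  have hli : LinearIndependent ℝ ![u, v] := by
    rw [linearIndependent_fin2]
    refine ⟨by simpa using hv0, fun a ha => ?_⟩
    apply hns
    rw [Submodule.mem_span_singleton]
    exact ⟨a, by simpa using ha⟩
  have hbdd2 : BddBelow {r | ∃ a ∈ L, ∃ b ∈ L, LinearIndependent ℝ ![a, b] ∧ ‖a‖ ≤ r ∧ ‖b‖ ≤ r} := by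
    refine ⟨0, ?_⟩
    rintro r ⟨a, _, b, _, _, ha, _⟩
    exact le_trans (norm_nonneg a) ha
  have h2 : lambda2 L ≤ ‖v‖ :=
    csInf_le hbdd2 ⟨u, huL, v, hvL, hli, le_of_lt huv, le_refl _⟩
  -- conclude
  have hfin : lambda1 L ≤ ‖v‖ / γ := by
    rw [le_div_iff₀ hγ]
    calc lambda1 L * γ = γ * lambda1 L := by ring
      _ ≤ lambda2 L := hgap
      _ ≤ ‖v‖ := h2
  refine ⟨u, huL, hproj_ne, ?_⟩
  calc ‖projPerp v u‖ ≤ ‖u‖ := by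
        have hle := (Submodule.orthogonalProjection ((Submodule.span ℝ {v})ᗮ)).le_opNorm u
        calc ‖projPerp v u‖ = ‖Submodule.orthogonalProjection ((Submodule.span ℝ {v})ᗮ) u‖ := rfl
          _ ≤ ‖Submodule.orthogonalProjection ((Submodule.span ℝ {v})ᗮ)‖ * ‖u‖ := hle
          _ ≤ 1 * ‖u‖ :=
              mul_le_mul_of_nonneg_right (Submodule.orthogonalProjectionOnto_norm_le _) (norm_nonneg u)
          _ = ‖u‖ := one_mul _
    _ = lambda1 L := hu_eq
    _ ≤ ‖v‖ / γ := hfin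

end
end

section
/- Let B = (b_1, …, b_n) be a basis of linearly independent vectors in ℝ^m, let W ⊆ {1, …, n} be nonempty, and fix i ∈ W. Define b'_j = b_j for j ∉ W, b'_j = b_j − b_i for j ∈ W with j ≠ i, and b'_i = 2b_i, and let B' = (b'_1, …, b'_n). Then for every α ∈ ℤ^n, the vector Σ_{j=1}^n α_j b_j belongs to L(B') if and only if Σ_{j ∈ W} α_j is even. -/
noncomputable section

/-- Let `B` be linearly independent, `W ⊆ {1, …, n}` nonempty and `i ∈ W`.
Define `b'_j = b_j` for `j ∉ W`, `b'_j = b_j - b_i` for `j ∈ W`, `j ≠ i`, and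
`b'_i = 2b_i`. Then for every `α ∈ ℤⁿ`, `∑ α_j b_j ∈ L(B')` iff `∑_{j ∈ W} α_j` is even. -/
theorem stmt14 {m n : ℕ} (B : Fin n → EuclideanSpace ℝ (Fin m))
    (hB : LinearIndependent ℝ B)
    (W : Finset (Fin n)) (hW : W.Nonempty) (i : Fin n) (hi : i ∈ W)
    (B' : Fin n → EuclideanSpace ℝ (Fin m))
    (hB' : ∀ j, B' j =
      if j = i then (2 : ℝ) • B i else if j ∈ W then B j - B i else B j)
    (α : Fin n → ℤ) :
    (∑ j, (α j : ℝ) • B j) ∈ latticeOf B' ↔ Even (∑ j ∈ W, α j) := by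
  classical
  have hrw : ∀ y : Fin n → ℝ, ∑ j, y j • B' j
      = ∑ j, y j • B j + (y i - ∑ k ∈ W.erase i, y k) • B i := by
    intro y
    have h1 : ∀ j : Fin n, y j • B' j
        = y j • B j + (if j = i then y i else if j ∈ W then -y j else 0) • B i := by
      intro j
      rw [hB' j]
      by_cases hj : j = i
      · subst hj
        simp [two_smul, smul_add, smul_smul, two_mul, add_smul]
      · by_cases hjW : j ∈ W
        · simp [hj, hjW, smul_sub, sub_eq_add_neg]
        · simp [hj, hjW]
    calc ∑ j, y j • B' j
        = ∑ j, (y j • B j + (if j = i then y i else if j ∈ W then -y j else 0) • B i) :=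
          Finset.sum_congr rfl fun j _ => h1 j
      _ = ∑ j, y j • B j + (∑ j, (if j = i then y i else if j ∈ W then -y j else 0)) • B i := by
          rw [Finset.sum_add_distrib, Finset.sum_smul]
      _ = _ := by
          congr 2
          rw [← Finset.sum_subset (Finset.subset_univ W) (by
              intro j _ hjW
              have hji : j ≠ i := fun h => hjW (h ▸ hi)
              simp [hji, hjW])]
          rw [← Finset.add_sum_erase _ _ hi]
          simp only [if_pos rfl]
          congr 1
          rw [← Finset.sum_neg_distrib]
          apply Finset.sum_congr rfl
          intro k hk
          have hki : k ≠ i := Finset.ne_of_mem_erase hk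
          have hkW : k ∈ W := Finset.mem_of_mem_erase hk
          simp [hki, hkW]
  constructor
  · rintro ⟨x, hx⟩
    rw [hrw] at hx
    set S : ℝ := ∑ k ∈ W.erase i, (x k : ℝ) with hS
    have h0 : ∑ j, (((α j : ℝ) - ((x j : ℝ) + if j = i then (x i : ℝ) - S else 0))) • B j = 0 := by
      have expand : ∑ j, ((x j : ℝ) + if j = i then (x i : ℝ) - S else 0) • B j
          = ∑ j, (x j : ℝ) • B j + ((x i : ℝ) - S) • B i := by
        simp only [add_smul, ite_smul, zero_smul]
        rw [Finset.sum_add_distrib,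
          Finset.sum_ite_eq' Finset.univ i (fun j => ((x i : ℝ) - S) • B j)]
        simp
      simp only [sub_smul]
      rw [Finset.sum_sub_distrib, expand, ← hx, sub_self]
    have hcoef := Fintype.linearIndependent_iff.mp hB _ h0
    have hαi : (α i : ℝ) = 2 * x i - S := by
      have h := hcoef i
      simp only [eq_self_iff_true, if_true] at h
      linarith [h]
    have hαj : ∀ j, j ≠ i → (α j : ℝ) = x j := by
      intro j hj
      have h := hcoef j
      simp only [if_neg hj, add_zero] at h
      linarith [h]
    have key : ((∑ j ∈ W, α j : ℤ) : ℝ) = 2 * x i := by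
      rw [← Finset.add_sum_erase _ _ hi]
      push_cast
      rw [hαi]
      have hone : ∑ k ∈ W.erase i, (α k : ℝ) = S :=
        Finset.sum_congr rfl fun k hk => hαj k (Finset.ne_of_mem_erase hk)
      rw [hone]; ring
    have keyz : (∑ j ∈ W, α j) = 2 * x i := by exact_mod_cast key
    exact ⟨x i, by omega⟩
  · rintro ⟨k, hk⟩
    refine ⟨Function.update α i k, ?_⟩
    rw [hrw]
    have hup : ∀ j, ((Function.update α i k j : ℤ) : ℝ)
        = (α j : ℝ) + (if j = i then (k : ℝ) - α i else 0) := by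
      intro j
      by_cases hj : j = i
      · subst hj; simp
      · simp [Function.update_of_ne hj, hj]
    have h2 : ∑ j, ((Function.update α i k j : ℤ) : ℝ) • B j
        = ∑ j, (α j : ℝ) • B j + ((k : ℝ) - α i) • B i := by
      calc ∑ j, ((Function.update α i k j : ℤ) : ℝ) • B j
          = ∑ j, ((α j : ℝ) • B j + (if j = i then ((k : ℝ) - α i) • B j else 0)) := by
            apply Finset.sum_congr rfl
            intro j _
            rw [hup j, add_smul, ite_smul, zero_smul]
        _ = _ := by
            rw [Finset.sum_add_distrib,
              Finset.sum_ite_eq' Finset.univ i (fun j => ((k : ℝ) - α i) • B j)]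
            simp
    rw [h2]
    have hSx : ∑ kk ∈ W.erase i, ((Function.update α i k kk : ℤ) : ℝ)
        = ∑ kk ∈ W.erase i, (α kk : ℝ) := by
      apply Finset.sum_congr rfl
      intro kk hkk
      rw [Function.update_of_ne (Finset.ne_of_mem_erase hkk)]
    rw [hSx, Function.update_self]
    have hkS : (α i : ℝ) + ∑ kk ∈ W.erase i, (α kk : ℝ) = (k : ℝ) + k := by
      have : ((∑ j ∈ W, α j : ℤ) : ℝ) = (k : ℝ) + k := by exact_mod_cast hk
      rw [← Finset.add_sum_erase _ _ hi] at this
      push_cast at this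
      linarith
    have : ((k : ℝ) - α i) + ((k : ℝ) - ∑ kk ∈ W.erase i, (α kk : ℝ)) = 0 := by linarith
    rw [add_assoc, ← add_smul]
    rw [this, zero_smul, add_zero]


end
end
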